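/- For the discontinuous function $F_a$ defined by $F_a(t)=F(t)-at$ for $t\geq 0$ and $F_a(t)=0$ for $t<0$ (with $f$ continuous, $f(0)=0$, $a>0$), the Clarke generalized directional derivative of $-F_a$ satisfies: $(-F_a)^0(t,s) = -(f(t)-a)s$ for $t>0$ and any $s$; $(-F_a)^0(0,s)=as$ for $s>0$; $(-F_a)^0(t,s)=0$ for $t<0$ or for $t=0, s\leq 0$. -/

import Mathlib

open MeasureTheory Filter

lemma auxIntF {f : ℝ → ℝ} (hf : ContinuousOn f (Set.Ici 0)) {x y : ℝ}
    (hx : 0 ≤ x) (hy : 0 ≤ y) : IntervalIntegrable f volume x y := by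
  apply (hf.mono ?_).intervalIntegrable
  intro u hu
  exact le_trans (le_min hx hy) hu.1

lemma auxKeyInt {f : ℝ → ℝ} (hf : ContinuousOn f (Set.Ici 0)) {x y c C : ℝ}
    (hx : 0 ≤ x) (hy : 0 ≤ y)
    (hb : ∀ u ∈ Set.uIcc x y, |f u - c| ≤ C) :
    |(∫ u in x..y, f u) - c * (y - x)| ≤ C * |y - x| := by
  have hint := auxIntF hf hx hy
  have heq : (∫ u in x..y, f u) - c * (y - x) = ∫ u in x..y, (f u - c) := by
    rw [intervalIntegral.integral_sub hint intervalIntegrable_const,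
      intervalIntegral.integral_const]
    simp [smul_eq_mul]; ring
  rw [heq]
  have := intervalIntegral.norm_integral_le_of_norm_le_const
    (f := fun u => f u - c) (C := C) (a := x) (b := y)
    (fun u hu => by simpa using hb u (Set.uIoc_subset_uIcc hu))
  simpa using this

lemma auxFdiff {f F : ℝ → ℝ} (hf_cont : ContinuousOn f (Set.Ici 0))
    (hF : ∀ t, 0 ≤ t → F t = ∫ τ in (0:ℝ)..t, f τ) :
    ∀ x y : ℝ, 0 ≤ x → 0 ≤ y → F y - F x = ∫ u in x..y, f u := by
  intro x y hx hy
  rw [hF x hx, hF y hy,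
    intervalIntegral.integral_interval_sub_left (auxIntF hf_cont le_rfl hy)
      (auxIntF hf_cont le_rfl hx)]

lemma auxFa' {a : ℝ} {f F Fa : ℝ → ℝ}
    (hF : ∀ t, 0 ≤ t → F t = ∫ τ in (0:ℝ)..t, f τ)
    (hFa : ∀ t, Fa t = if 0 ≤ t then F t - a * t else 0) :
    ∀ x : ℝ, Fa x = F (max x 0) - a * max x 0 := by
  have hF0 : F 0 = 0 := by rw [hF 0 le_rfl, intervalIntegral.integral_same]
  intro x; rw [hFa x]; split_ifs with h
  · rw [max_eq_left h]
  · rw [max_eq_right (le_of_lt (lt_of_not_ge h)), hF0]; ring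

lemma auxFmono {f F : ℝ → ℝ} (hf_cont : ContinuousOn f (Set.Ici 0))
    (hf_nonneg : ∀ t, 0 ≤ t → 0 ≤ f t)
    (hF : ∀ t, 0 ≤ t → F t = ∫ τ in (0:ℝ)..t, f τ) :
    ∀ x y : ℝ, 0 ≤ x → x ≤ y → F x ≤ F y := by
  intro x y hx hxy
  have hd := auxFdiff hf_cont hF x y hx (hx.trans hxy)
  have hnn : 0 ≤ ∫ u in x..y, f u :=
    intervalIntegral.integral_nonneg hxy (fun u hu => hf_nonneg u (hx.trans hu.1))
  linarith

lemma auxFub {f F : ℝ → ℝ} (hf_cont : ContinuousOn f (Set.Ici 0))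
    (hF : ∀ t, 0 ≤ t → F t = ∫ τ in (0:ℝ)..t, f τ) :
    ∀ x y C : ℝ, 0 ≤ x → x ≤ y →
      (∀ u : ℝ, 0 ≤ u → u ≤ y → f u ≤ C) → F y - F x ≤ C * (y - x) := by
  intro x y C hx hxy hC
  rw [auxFdiff hf_cont hF x y hx (hx.trans hxy)]
  calc (∫ u in x..y, f u) ≤ ∫ _u in x..y, C := by
        apply intervalIntegral.integral_mono_on hxy
          (auxIntF hf_cont hx (hx.trans hxy)) intervalIntegrable_const
        exact fun u hu => hC u (hx.trans hu.1) hu.2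
    _ = C * (y - x) := by simp [smul_eq_mul]; ring

lemma auxSmall {f : ℝ → ℝ} (hf_cont : ContinuousOn f (Set.Ici 0)) (hf0 : f 0 = 0) :
    ∀ C : ℝ, 0 < C → ∃ δ > 0, ∀ u : ℝ, 0 ≤ u → u ≤ δ → f u ≤ C := by
  intro C hC
  have hc : ContinuousWithinAt f (Set.Ici 0) 0 := hf_cont 0 (Set.mem_Ici.mpr le_rfl)
  rw [Metric.continuousWithinAt_iff] at hc
  obtain ⟨δ, hδ, hδ'⟩ := hc C hC
  refine ⟨δ/2, by linarith, fun u hu hu' => ?_⟩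
  have hdu : dist u 0 < δ := by
    rw [Real.dist_eq, sub_zero, abs_of_nonneg hu]; linarith
  have := hδ' hu hdu
  rw [hf0, Real.dist_eq, sub_zero] at this
  exact le_of_lt (lt_of_le_of_lt (le_abs_self _) this)

lemma auxMax1 : ∀ x d : ℝ, 0 ≤ d → max (x + d) 0 ≤ max x 0 + d := by
  intro x d hd
  apply max_le (add_le_add_left (le_max_left x 0) d)
  have := le_max_right x 0; linarith

lemma auxMax2 : ∀ x y : ℝ, x ≤ y → max x 0 ≤ max y 0 :=
  fun x y h => max_le_max h le_rfl

/-- Case `t > 0`. -/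
lemma auxPart1 (a : ℝ) (f F Fa : ℝ → ℝ)
    (hf_cont : ContinuousOn f (Set.Ici 0))
    (hF : ∀ t, 0 ≤ t → F t = ∫ τ in (0:ℝ)..t, f τ)
    (hFa : ∀ t, Fa t = if 0 ≤ t then F t - a * t else 0)
    (t s : ℝ) (ht : 0 < t) :
    Filter.limsup (fun q : ℝ × ℝ => (-(Fa (q.2 + q.1 * s)) + Fa q.2) / q.1)
        ((nhdsWithin 0 (Set.Ioi 0)) ×ˢ (nhds t)) = -(f t - a) * s := by
  apply Filter.Tendsto.limsup_eq
  rw [Metric.tendsto_nhds]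
  intro ε hε
  have hs1 : (0:ℝ) < |s| + 1 := by positivity
  set C := ε / (2 * (|s| + 1)) with hCdef
  have hCpos : 0 < C := by positivity
  have hc : ContinuousWithinAt f (Set.Ici 0) t := hf_cont t (Set.mem_Ici.mpr ht.le)
  rw [Metric.continuousWithinAt_iff] at hc
  obtain ⟨δ, hδ, hδ'⟩ := hc C hCpos
  set r := min δ t with hrdef
  have hr : 0 < r := lt_min hδ ht
  have hrδ : r ≤ δ := min_le_left _ _
  have hrt : r ≤ t := min_le_right _ _
  have h1 : ∀ᶠ ξ in nhdsWithin (0:ℝ) (Set.Ioi 0),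
      ξ ∈ Set.Ioo 0 ((r/2) / (|s| + 1)) := by
    have hmem : Set.Ioo (0:ℝ) ((r/2) / (|s| + 1)) ∈ nhdsWithin (0:ℝ) (Set.Ioi 0) :=
      Ioo_mem_nhdsGT_of_mem ⟨le_rfl, by positivity⟩
    exact hmem
  have h2 : ∀ᶠ τ in nhds t, |τ - t| < r / 2 := by
    have hmem : Set.Ioo (t - r/2) (t + r/2) ∈ nhds t :=
      Ioo_mem_nhds (by linarith) (by linarith)
    filter_upwards [hmem] with τ hτ
    rw [abs_lt]; exact ⟨by linarith [hτ.1], by linarith [hτ.2]⟩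
  filter_upwards [h1.prod_mk h2]
  rintro ⟨ξ, τ⟩ ⟨⟨hξ0, hξr⟩, hτ⟩
  have hξs : |ξ * s| < r / 2 := by
    rw [abs_mul, abs_of_pos hξ0]
    calc ξ * |s| ≤ ξ * (|s| + 1) := by nlinarith [abs_nonneg s]
      _ < r / 2 := (lt_div_iff₀ hs1).mp hξr
  obtain ⟨hτl, hτu⟩ := abs_lt.mp hτ
  have hτpos : 0 < τ := by linarith
  have hξsl : -(r/2) < ξ * s := neg_lt_of_abs_lt hξs
  have hξsu : ξ * s < r/2 := lt_of_abs_lt hξs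
  have hy : 0 < τ + ξ * s := by linarith
  have hball : ∀ u ∈ Set.uIcc τ (τ + ξ*s), |f u - f t| ≤ C := by
    intro u hu
    have h0u : 0 ≤ u := le_trans (le_min hτpos.le hy.le) hu.1
    have hud : dist u t < δ := by
      rw [Real.dist_eq, abs_lt]
      rcases le_total τ (τ + ξ*s) with hle | hle
      · rw [Set.uIcc_of_le hle] at hu
        exact ⟨by linarith [hu.1], by linarith [hu.2]⟩
      · rw [Set.uIcc_of_ge hle] at hu
        exact ⟨by linarith [hu.1], by linarith [hu.2]⟩
    have := hδ' h0u hud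
    rw [Real.dist_eq] at this
    exact this.le
  have hkey := auxKeyInt hf_cont hτpos.le hy.le hball
  have harg : τ + ξ * s - τ = ξ * s := by ring
  rw [harg] at hkey
  have hQ : (-(Fa (τ + ξ*s)) + Fa τ) / ξ
      = -((∫ u in τ..(τ+ξ*s), f u) / ξ) + a * s := by
    rw [hFa (τ+ξ*s), hFa τ, if_pos hy.le, if_pos hτpos.le]
    have hd := auxFdiff hf_cont hF τ (τ+ξ*s) hτpos.le hy.le
    have hFy : F (τ+ξ*s) = F τ + ∫ u in τ..(τ+ξ*s), f u := by linarith
    rw [hFy]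
    field_simp
    ring
  rw [Real.dist_eq]
  simp only
  rw [hQ]
  have hrw : (-((∫ u in τ..(τ+ξ*s), f u) / ξ) + a * s) - (-(f t - a) * s)
      = -(((∫ u in τ..(τ+ξ*s), f u) - f t * (ξ * s)) / ξ) := by
    field_simp; ring
  rw [hrw, abs_neg, abs_div, abs_of_pos hξ0, div_lt_iff₀ hξ0]
  calc |(∫ u in τ..(τ+ξ*s), f u) - f t * (ξ * s)| ≤ C * |ξ * s| := hkey
    _ ≤ C * (ξ * (|s| + 1)) := by
        rw [abs_mul, abs_of_pos hξ0]
        nlinarith [abs_nonneg s, hCpos.le, hξ0.le]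
    _ < ε * ξ := by
        have heq : C * (ξ * (|s| + 1)) = ε * ξ / 2 := by
          rw [hCdef]; field_simp
        rw [heq]
        nlinarith [mul_pos hε hξ0]

/-- Case `t = 0`, `s > 0`. -/
lemma auxPart2 (a : ℝ) (ha : 0 < a) (f F Fa : ℝ → ℝ)
    (hf_cont : ContinuousOn f (Set.Ici 0)) (hf0 : f 0 = 0)
    (hf_nonneg : ∀ t, 0 ≤ t → 0 ≤ f t)
    (hF : ∀ t, 0 ≤ t → F t = ∫ τ in (0:ℝ)..t, f τ)
    (hFa : ∀ t, Fa t = if 0 ≤ t then F t - a * t else 0)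
    (s : ℝ) (hs : 0 < s) :
    Filter.limsup (fun q : ℝ × ℝ => (-(Fa (q.2 + q.1 * s)) + Fa q.2) / q.1)
        ((nhdsWithin 0 (Set.Ioi 0)) ×ˢ (nhds 0)) = a * s := by
  have hFa' := auxFa' hF hFa
  set Q : ℝ × ℝ → ℝ := fun q => (-(Fa (q.2 + q.1 * s)) + Fa q.2) / q.1 with hQdef
  set L : Filter (ℝ × ℝ) := (nhdsWithin (0:ℝ) (Set.Ioi 0)) ×ˢ (nhds (0:ℝ)) with hLdef
  have hub : ∀ᶠ q in L, Q q ≤ a * s := by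
    have h1 : ∀ᶠ ξ in nhdsWithin (0:ℝ) (Set.Ioi 0), ξ ∈ Set.Ioi (0:ℝ) :=
      self_mem_nhdsWithin
    have h2 : ∀ᶠ τ in nhds (0:ℝ), True := Filter.Eventually.of_forall fun _ => trivial
    filter_upwards [h1.prod_mk h2]
    rintro ⟨ξ, τ⟩ ⟨hξ0, -⟩
    have hξ0 : 0 < ξ := hξ0
    have hξs : 0 ≤ ξ * s := by positivity
    simp only [hQdef]
    rw [div_le_iff₀ hξ0, hFa', hFa']
    have hm1 : max (τ + ξ*s) 0 ≤ max τ 0 + ξ*s := auxMax1 τ (ξ*s) hξs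
    have hm2 : max τ 0 ≤ max (τ + ξ*s) 0 := auxMax2 _ _ (by linarith)
    have hFm : F (max τ 0) ≤ F (max (τ + ξ*s) 0) :=
      auxFmono hf_cont hf_nonneg hF _ _ (le_max_right _ _) hm2
    nlinarith
  have hu : Tendsto (fun n : ℕ => ((1:ℝ)/(n+1), (1:ℝ)/(n+1))) atTop L := by
    have h0 : Tendsto (fun n : ℕ => (1:ℝ)/(n+1)) atTop (nhds 0) :=
      tendsto_one_div_add_atTop_nhds_zero_nat
    refine Tendsto.prodMk ?_ h0
    rw [tendsto_nhdsWithin_iff]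
    exact ⟨h0, Filter.Eventually.of_forall fun n => Set.mem_Ioi.mpr (by positivity)⟩
  have hfreq : ∀ ε : ℝ, 0 < ε → ∃ᶠ q in L, a * s - ε ≤ Q q := by
    intro ε hε
    obtain ⟨δ, hδ, hδ'⟩ := auxSmall hf_cont hf0 (ε/(s+1)) (by positivity)
    apply hu.frequently
    apply Filter.Eventually.frequently
    have hten : Tendsto (fun n : ℕ => (1+s)*((1:ℝ)/(n+1))) atTop (nhds 0) := by
      have := tendsto_one_div_add_atTop_nhds_zero_nat.const_mul (1+s)
      simpa using this
    have hev2 : ∀ᶠ n : ℕ in atTop, (1+s)*((1:ℝ)/(n+1)) < δ :=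
      hten.eventually_lt_const hδ
    filter_upwards [hev2] with n hn
    have hξ0 : (0:ℝ) < 1/(n+1) := by positivity
    set ξ : ℝ := 1/(n+1) with hξdef
    have hy0 : 0 ≤ ξ + ξ * s := by nlinarith
    have hyδ : ξ + ξ * s ≤ δ := by nlinarith
    have hFb := auxFub hf_cont hF ξ (ξ + ξ*s) (ε/(s+1)) hξ0.le (by nlinarith)
      (fun u hu hu' => hδ' u hu (le_trans hu' hyδ))
    have hεs : (ε/(s+1)) * (s+1) = ε := by field_simp
    simp only [hQdef]
    rw [le_div_iff₀ hξ0, hFa (ξ + ξ*s), hFa ξ, if_pos hy0, if_pos hξ0.le]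
    nlinarith
  have hcb : IsCoboundedUnder (· ≤ ·) L Q :=
    Filter.IsCoboundedUnder.of_frequently_ge (hfreq 1 one_pos)
  have hbd : IsBoundedUnder (· ≤ ·) L Q := isBoundedUnder_of_eventually_le hub
  have hle : Filter.limsup Q L ≤ a * s := Filter.limsup_le_of_le hcb hub
  have hge : a * s ≤ Filter.limsup Q L := by
    apply le_of_forall_pos_le_add
    intro ε hε
    have := Filter.le_limsup_of_frequently_le (hfreq ε hε) hbd
    linarith
  exact le_antisymm hle hge

/-- Case `t < 0`. -/
lemma auxPart3 (a : ℝ) (f F Fa : ℝ → ℝ)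
    (hFa : ∀ t, Fa t = if 0 ≤ t then F t - a * t else 0)
    (t s : ℝ) (ht : t < 0) :
    Filter.limsup (fun q : ℝ × ℝ => (-(Fa (q.2 + q.1 * s)) + Fa q.2) / q.1)
        ((nhdsWithin 0 (Set.Ioi 0)) ×ˢ (nhds t)) = 0 := by
  have hs1 : (0:ℝ) < |s| + 1 := by positivity
  have hev : ∀ᶠ q : ℝ × ℝ in (nhdsWithin (0:ℝ) (Set.Ioi 0)) ×ˢ (nhds t),
      (fun q : ℝ × ℝ => (-(Fa (q.2 + q.1 * s)) + Fa q.2) / q.1) q = (fun _ => (0:ℝ)) q := by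
    have h1 : ∀ᶠ ξ in nhdsWithin (0:ℝ) (Set.Ioi 0),
        ξ ∈ Set.Ioo 0 ((-t/2) / (|s| + 1)) := by
      have hmem : Set.Ioo (0:ℝ) ((-t/2) / (|s| + 1)) ∈ nhdsWithin (0:ℝ) (Set.Ioi 0) :=
        Ioo_mem_nhdsGT_of_mem ⟨le_rfl, div_pos (by linarith) hs1⟩
      exact hmem
    have h2 : ∀ᶠ τ in nhds t, |τ - t| < -t/2 := by
      have hmem : Set.Ioo (t + t/2) (t - t/2) ∈ nhds t :=
        Ioo_mem_nhds (by linarith) (by linarith)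
      filter_upwards [hmem] with τ hτ
      rw [abs_lt]; exact ⟨by linarith [hτ.1], by linarith [hτ.2]⟩
    filter_upwards [h1.prod_mk h2]
    rintro ⟨ξ, τ⟩ ⟨⟨hξ0, hξr⟩, hτ⟩
    obtain ⟨hτl, hτu⟩ := abs_lt.mp hτ
    have hτneg : τ < 0 := by linarith
    have hξs : ξ * s < -t/2 := by
      calc ξ * s ≤ ξ * |s| := by nlinarith [le_abs_self s, hξ0.le]
        _ ≤ ξ * (|s| + 1) := by nlinarith [abs_nonneg s]
        _ < -t/2 := (lt_div_iff₀ hs1).mp hξr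
    have hyneg : τ + ξ * s < 0 := by linarith
    simp only
    rw [hFa (τ + ξ * s), hFa τ, if_neg (by linarith), if_neg (by linarith)]
    simp
  rw [Filter.limsup_congr hev]
  exact Filter.limsup_const 0

/-- Case `t = 0`, `s ≤ 0`. -/
lemma auxPart4 (a : ℝ) (ha : 0 < a) (f F Fa : ℝ → ℝ)
    (hf_cont : ContinuousOn f (Set.Ici 0)) (hf0 : f 0 = 0)
    (hf_nonneg : ∀ t, 0 ≤ t → 0 ≤ f t)
    (hF : ∀ t, 0 ≤ t → F t = ∫ τ in (0:ℝ)..t, f τ)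
    (hFa : ∀ t, Fa t = if 0 ≤ t then F t - a * t else 0)
    (s : ℝ) (hs : s ≤ 0) :
    Filter.limsup (fun q : ℝ × ℝ => (-(Fa (q.2 + q.1 * s)) + Fa q.2) / q.1)
        ((nhdsWithin 0 (Set.Ioi 0)) ×ˢ (nhds 0)) = 0 := by
  have hFa' := auxFa' hF hFa
  set Q : ℝ × ℝ → ℝ := fun q => (-(Fa (q.2 + q.1 * s)) + Fa q.2) / q.1 with hQdef
  set L : Filter (ℝ × ℝ) := (nhdsWithin (0:ℝ) (Set.Ioi 0)) ×ˢ (nhds (0:ℝ)) with hLdef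
  have hu : Tendsto (fun n : ℕ => ((1:ℝ)/(n+1), -((1:ℝ)/(n+1)))) atTop L := by
    have h0 : Tendsto (fun n : ℕ => (1:ℝ)/(n+1)) atTop (nhds 0) :=
      tendsto_one_div_add_atTop_nhds_zero_nat
    refine Tendsto.prodMk ?_ ?_
    · rw [tendsto_nhdsWithin_iff]
      exact ⟨h0, Filter.Eventually.of_forall fun n => Set.mem_Ioi.mpr (by positivity)⟩
    · have := h0.neg
      simpa using this
  have hfreq : ∃ᶠ q in L, (0:ℝ) ≤ Q q := by
    apply hu.frequently
    apply Filter.Eventually.frequently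
    apply Filter.Eventually.of_forall
    intro n
    have hξ0 : (0:ℝ) < 1/(n+1) := by positivity
    have hτneg : -((1:ℝ)/(n+1)) < 0 := by linarith
    have hyneg : -((1:ℝ)/(n+1)) + (1/(n+1)) * s < 0 := by nlinarith
    simp only [hQdef]
    rw [hFa, hFa, if_neg (by linarith), if_neg (by linarith)]
    simp
  have hub : ∀ ε : ℝ, 0 < ε → ∀ᶠ q in L, Q q ≤ ε := by
    intro ε hε
    have hs1 : (0:ℝ) < |s| + 1 := by positivity
    obtain ⟨δ, hδ, hδ'⟩ := auxSmall hf_cont hf0 (ε/(|s|+1)) (by positivity)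
    have h1 : ∀ᶠ ξ in nhdsWithin (0:ℝ) (Set.Ioi 0), ξ ∈ Set.Ioi (0:ℝ) :=
      self_mem_nhdsWithin
    have h2 : ∀ᶠ τ in nhds (0:ℝ), τ < δ := by
      have hmem : Set.Iio δ ∈ nhds (0:ℝ) := Iio_mem_nhds hδ
      exact hmem
    filter_upwards [h1.prod_mk h2]
    rintro ⟨ξ, τ⟩ ⟨hξ0, hτδ⟩
    have hξ0 : 0 < ξ := hξ0
    have hξs : ξ * s ≤ 0 := by nlinarith
    simp only [hQdef]
    rw [div_le_iff₀ hξ0, hFa', hFa']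
    have hm2 : max (τ + ξ*s) 0 ≤ max τ 0 := auxMax2 _ _ (by linarith)
    have hm1 : max τ 0 ≤ max (τ + ξ*s) 0 + (-(ξ*s)) := by
      have := auxMax1 (τ + ξ*s) (-(ξ*s)) (by linarith)
      simpa using this
    have hτub : max τ 0 ≤ δ := max_le hτδ.le hδ.le
    have hFb := auxFub hf_cont hF (max (τ + ξ*s) 0) (max τ 0) (ε/(|s|+1))
      (le_max_right _ _) hm2
      (fun u hu hu' => hδ' u hu (le_trans hu' hτub))
    have hεs : (ε/(|s|+1)) * (|s|+1) = ε := by field_simp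
    have habs : -s ≤ |s| := by
      rw [abs_of_nonpos hs]
    have hC : 0 < ε/(|s|+1) := div_pos hε hs1
    have h3 : F (max τ 0) - F (max (τ + ξ*s) 0) ≤ ε/(|s|+1) * (-(ξ*s)) := by
      calc F (max τ 0) - F (max (τ + ξ*s) 0)
          ≤ ε/(|s|+1) * (max τ 0 - max (τ + ξ*s) 0) := hFb
        _ ≤ ε/(|s|+1) * (-(ξ*s)) := mul_le_mul_of_nonneg_left (by linarith) hC.le
    have h7 : ε/(|s|+1) * (-s) ≤ ε := by nlinarith
    have h8 : ξ * (ε/(|s|+1) * (-s)) ≤ ξ * ε := mul_le_mul_of_nonneg_left h7 hξ0.le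
    have h6 : a * (max (τ + ξ*s) 0) ≤ a * (max τ 0) := mul_le_mul_of_nonneg_left hm2 ha.le
    nlinarith [h3, h8, h6]
  have hcb : IsCoboundedUnder (· ≤ ·) L Q :=
    Filter.IsCoboundedUnder.of_frequently_ge hfreq
  have hbd : IsBoundedUnder (· ≤ ·) L Q :=
    isBoundedUnder_of_eventually_le (hub 1 one_pos)
  have hle : Filter.limsup Q L ≤ 0 := by
    apply le_of_forall_pos_le_add
    intro ε hε
    have := Filter.limsup_le_of_le hcb (hub ε hε)
    linarith
  have hge : (0:ℝ) ≤ Filter.limsup Q L :=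
    Filter.le_limsup_of_frequently_le hfreq hbd
  exact le_antisymm hle hge

/-- explicit computation of the Clarke generalized directional
    derivative of `-F_a`. -/
theorem stmt3 (a : ℝ) (ha : 0 < a) (f F Fa : ℝ → ℝ)
    (hf_cont : ContinuousOn f (Set.Ici 0)) (hf0 : f 0 = 0)
    (hf_nonneg : ∀ t, 0 ≤ t → 0 ≤ f t)
    (hF : ∀ t, 0 ≤ t → F t = ∫ τ in (0:ℝ)..t, f τ)
    (hFa : ∀ t, Fa t = if 0 ≤ t then F t - a * t else 0)
    (G : ℝ → ℝ → ℝ)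
    -- `G t s` is the Clarke generalized directional derivative
    -- `(-F_a)⁰(t,s) = limsup_{ξ↘0, τ→t} (-F_a(τ+ξs)+F_a(τ))/ξ`
    (hG : ∀ t s, G t s =
      Filter.limsup (fun q : ℝ × ℝ => (-(Fa (q.2 + q.1 * s)) + Fa q.2) / q.1)
        ((nhdsWithin 0 (Set.Ioi 0)) ×ˢ (nhds t))) :
    (∀ t s : ℝ, 0 < t → G t s = -(f t - a) * s) ∧
    (∀ s : ℝ, 0 < s → G 0 s = a * s) ∧
    (∀ t s : ℝ, t < 0 → G t s = 0) ∧
    (∀ s : ℝ, s ≤ 0 → G 0 s = 0) := by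
  refine ⟨?_, ?_, ?_, ?_⟩
  · intro t s ht
    rw [hG t s]
    exact auxPart1 a f F Fa hf_cont hF hFa t s ht
  · intro s hs
    rw [hG 0 s]
    exact auxPart2 a ha f F Fa hf_cont hf0 hf_nonneg hF hFa s hs
  · intro t s ht
    rw [hG t s]
    exact auxPart3 a f F Fa hFa t s ht
  · intro s hs
    rw [hG 0 s]
    exact auxPart4 a ha f F Fa hf_cont hf0 hf_nonneg hF hFa s hs
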